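/- Let A be an n×n real matrix with A^{m+1} = 0, let c ∈ ℝ, set n_k = 𝟙ᵀA^k𝟙 for k = 0,…,m, and let B = 𝟙𝟙ᵀ + c·A. Suppose λ ∈ ℝ, λ ≠ 0, satisfies λ^{m+1} = Σ_{k=0}^{m} n_k·c^k·λ^{m−k} (i.e., λ is a nonzero eigenvalue of B). Then the vector v = Σ_{k=0}^{m} (c/λ)^k·A^k·𝟙 satisfies B·v = λ·v; moreover the sum of the entries of v equals λ, so v ≠ 0. -/

import Mathlib

/-- Eigenvectors of `B = 𝟙𝟙ᵀ + c·A` for nonzero eigenvalues, given in terms of the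
localized path polynomials `v_j = p_j^G(c/λ)` (here `v = Σ_k (c/λ)^k A^k 𝟙`). -/
theorem stmt_8 (n m : ℕ) (A : Matrix (Fin n) (Fin n) ℝ) (hnil : A ^ (m + 1) = 0)
    (c lam : ℝ) (hlam : lam ≠ 0)
    (heig : lam ^ (m + 1) =
      ∑ k ∈ Finset.range (m + 1), (∑ i, ∑ j, (A ^ k) i j) * c ^ k * lam ^ (m - k))
    (B : Matrix (Fin n) (Fin n) ℝ)
    (hB : B = Matrix.of (fun _ _ => (1 : ℝ)) + c • A)
    (v : Fin n → ℝ)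
    (hv : v = ∑ k ∈ Finset.range (m + 1), (c / lam) ^ k • (A ^ k).mulVec (fun _ => (1 : ℝ))) :
    B.mulVec v = lam • v ∧ (∑ j, v j) = lam ∧ v ≠ 0 := by
  have hlm : lam ^ m ≠ 0 := pow_ne_zero _ hlam
  set u : Fin n → ℝ := fun _ => (1 : ℝ) with hu
  have hsum : (∑ j, v j) = lam := by
    have h1 : (∑ j, v j)
        = ∑ k ∈ Finset.range (m + 1), (∑ i, ∑ j, (A ^ k) i j) * (c / lam) ^ k := by
      rw [hv]
      simp only [Finset.sum_apply, Pi.smul_apply, smul_eq_mul, Matrix.mulVec,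
        dotProduct, hu, mul_one]
      rw [Finset.sum_comm]
      refine Finset.sum_congr rfl fun k hk => ?_
      rw [← Finset.mul_sum, mul_comm]
    have h2 : ∀ k ∈ Finset.range (m + 1),
        (∑ i, ∑ j, (A ^ k) i j) * c ^ k * lam ^ (m - k)
        = ((∑ i, ∑ j, (A ^ k) i j) * (c / lam) ^ k) * lam ^ m := by
      intro k hk
      have hk' : k ≤ m := Nat.lt_succ_iff.mp (Finset.mem_range.mp hk)
      rw [pow_sub₀ _ hlam hk', div_pow]
      field_simp
    have h3 : lam * lam ^ m = (∑ j, v j) * lam ^ m := by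
      rw [h1, Finset.sum_mul, ← pow_succ', heig]
      exact Finset.sum_congr rfl h2
    exact (mul_right_cancel₀ hlm h3).symm
  have hBv : B.mulVec v = lam • v := by
    rw [hB, Matrix.add_mulVec, Matrix.smul_mulVec]
    have hones : (Matrix.of (fun _ _ => (1 : ℝ))).mulVec v = lam • u := by
      funext i
      simp [Matrix.mulVec, dotProduct, hsum, hu]
    have hAv : A.mulVec v
        = ∑ k ∈ Finset.range (m + 1), (c / lam) ^ k • (A ^ (k + 1)).mulVec u := by
      rw [hv, ← Matrix.mulVecLin_apply, map_sum]
      refine Finset.sum_congr rfl fun k hk => ?_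
      rw [map_smul, Matrix.mulVecLin_apply, Matrix.mulVec_mulVec, ← pow_succ']
    have hlast : (A ^ (m + 1)).mulVec u = 0 := by rw [hnil]; simp
    have hA0 : ((A ^ 0).mulVec u) = u := by
      rw [pow_zero]; exact Matrix.one_mulVec u
    rw [hones, hAv, Finset.sum_range_succ, hlast, smul_zero, add_zero,
      hv, Finset.sum_range_succ', smul_add, pow_zero, one_smul, hA0, add_comm]
    congr 1
    rw [Finset.smul_sum, Finset.smul_sum]
    refine Finset.sum_congr rfl fun k hk => ?_
    rw [smul_smul, smul_smul, pow_succ]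
    congr 1
    field_simp
    rw [pow_succ, mul_comm lam, mul_assoc, div_mul_cancel₀ c hlam, mul_comm]
  refine ⟨hBv, hsum, ?_⟩
  intro h0
  rw [h0] at hsum
  simp at hsum
  exact hlam hsum.symm
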